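/- For real numbers a > 0 and b₁, b₂, b₃, the integral over all real t of Φ(at+b₁)·(Φ(at+b₂)−Φ(at+b₃)) dt equals (−√2/a)·[((b₁−b₂)/√2)·Φ((b₁−b₂)/√2) + φ((b₁−b₂)/√2) − ((b₁−b₃)/√2)·Φ((b₁−b₃)/√2) − φ((b₁−b₃)/√2)]. -/

import Mathlib

open MeasureTheory Real Filter Topology

noncomputable def phi (t : ℝ) : ℝ := Real.exp (-t^2/2) / Real.sqrt (2*Real.pi)

noncomputable def Phi (x : ℝ) : ℝ := ∫ s in Set.Iic x, phi s

lemma phi_eq (t : ℝ) : phi t = Real.exp (-(1/2) * t^2) * (Real.sqrt (2*Real.pi))⁻¹ := by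
  rw [phi, div_eq_mul_inv]; ring_nf

lemma phi_pos (t : ℝ) : 0 < phi t :=
  div_pos (Real.exp_pos _) (Real.sqrt_pos.2 (by positivity))

lemma phi_le (t : ℝ) : phi t ≤ (Real.sqrt (2*Real.pi))⁻¹ := by
  rw [phi_eq]
  have h1 : Real.exp (-(1/2) * t^2) ≤ 1 := by
    rw [Real.exp_le_one_iff]; nlinarith [sq_nonneg t]
  nlinarith [Real.sqrt_nonneg (2*Real.pi), inv_nonneg.2 (Real.sqrt_nonneg (2*Real.pi))]

lemma continuous_phi : Continuous phi := by unfold phi; fun_prop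

lemma phi_neg (t : ℝ) : phi (-t) = phi t := by simp [phi, neg_sq]

lemma integrable_phi : Integrable phi := by
  have : phi = fun t => Real.exp (-(1/2) * t^2) * (Real.sqrt (2*Real.pi))⁻¹ :=
    funext phi_eq
  rw [this]
  exact (integrable_exp_neg_mul_sq (by norm_num : (0:ℝ) < 1/2)).mul_const _

lemma integral_phi : ∫ t, phi t = 1 := by
  simp only [phi_eq]
  rw [MeasureTheory.integral_mul_const, integral_gaussian]
  rw [show π / (1/2) = 2 * π by ring]
  rw [mul_inv_cancel₀ (by positivity)]

lemma Phi_sub_Phi (x y : ℝ) : Phi x - Phi y = ∫ u in y..x, phi u :=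
  intervalIntegral.integral_Iic_sub_Iic integrable_phi.integrableOn integrable_phi.integrableOn

lemma hasDerivAt_Phi (x : ℝ) : HasDerivAt Phi (phi x) x := by
  have h : ∀ y, Phi y = (∫ u in (0:ℝ)..y, phi u) + Phi 0 := by
    intro y
    have := Phi_sub_Phi y 0
    linarith
  have : HasDerivAt (fun y => (∫ u in (0:ℝ)..y, phi u) + Phi 0) (phi x) x := by
    apply HasDerivAt.add_const
    exact intervalIntegral.integral_hasDerivAt_right
      integrable_phi.intervalIntegrable
      (continuous_phi.stronglyMeasurableAtFilter _ _)
      continuous_phi.continuousAt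
  exact (funext h : Phi = _) ▸ this

lemma Phi_nonneg (x : ℝ) : 0 ≤ Phi x :=
  integral_nonneg fun t => (phi_pos t).le

lemma Phi_le_one (x : ℝ) : Phi x ≤ 1 := by
  rw [← integral_phi]
  exact setIntegral_le_integral integrable_phi
    (Filter.Eventually.of_forall fun t => (phi_pos t).le)

lemma continuous_Phi : Continuous Phi :=
  continuous_iff_continuousAt.2 fun x => (hasDerivAt_Phi x).continuousAt

lemma Phi_tendsto_atTop : Tendsto Phi atTop (𝓝 1) := by
  have h := tendsto_setIntegral_of_monotone (f := phi) (μ := volume)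
    (s := fun x : ℝ => Set.Iic x) (fun _ => measurableSet_Iic)
    (fun i j hij => Set.Iic_subset_Iic.2 hij)
    (by rw [Set.iUnion_Iic]; exact integrable_phi.integrableOn)
  rw [Set.iUnion_Iic] at h
  simp only [setIntegral_univ, integral_phi] at h
  exact h

lemma Phi_tendsto_atBot : Tendsto Phi atBot (𝓝 0) := by
  have h := tendsto_setIntegral_of_antitone (f := phi) (μ := volume)
    (s := fun x : ℝ => Set.Iic (-x)) (fun _ => measurableSet_Iic)
    (fun i j hij => Set.Iic_subset_Iic.2 (by linarith))
    ⟨0, integrable_phi.integrableOn⟩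
  have hempty : (⋂ x : ℝ, Set.Iic (-x)) = ∅ := by
    ext y
    simp only [Set.mem_iInter, Set.mem_Iic, Set.mem_empty_iff_false, iff_false, not_forall]
    exact ⟨-(y - 1), by push_neg; linarith⟩
  rw [hempty] at h
  simp only [Measure.restrict_empty, integral_zero_measure] at h
  have h2 : Tendsto (fun x : ℝ => Phi (-x)) atTop (𝓝 0) := h
  have h3 := h2.comp tendsto_neg_atBot_atTop
  refine h3.congr fun x => ?_
  simp [Function.comp]

lemma Phi_zero : Phi 0 = 1/2 := by
  have hsym : (∫ x in Set.Iic (0:ℝ), phi x) = ∫ x in Set.Ioi (0:ℝ), phi x := by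
    have : (∫ x in Set.Iic (0:ℝ), phi (-x)) = ∫ x in Set.Ioi (-(0:ℝ)), phi x :=
      integral_comp_neg_Iic 0 phi
    simp only [phi_neg, neg_zero] at this
    exact this
  have hadd : (∫ x in Set.Iic (0:ℝ), phi x) + ∫ x in Set.Ioi (0:ℝ), phi x = 1 := by
    rw [intervalIntegral.integral_Iic_add_Ioi integrable_phi.integrableOn
      integrable_phi.integrableOn, integral_phi]
  rw [Phi]
  linarith

lemma integrable_Phi_mul_phi (c : ℝ) : Integrable (fun s => Phi (s + c) * phi s) := by
  refine Integrable.mono' integrable_phi ?_ ?_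
  · exact ((continuous_Phi.comp (by fun_prop)).mul continuous_phi).aestronglyMeasurable
  · refine Filter.Eventually.of_forall fun s => ?_
    rw [Real.norm_eq_abs, abs_of_nonneg (mul_nonneg (Phi_nonneg _) (phi_pos _).le)]
    nlinarith [Phi_nonneg (s + c), Phi_le_one (s + c), phi_pos s]

lemma integral_phi_mul_phi (c : ℝ) :
    ∫ s, phi (s + c) * phi s = phi (c / Real.sqrt 2) / Real.sqrt 2 := by
  have sq2pi : Real.sqrt (2*π) * Real.sqrt (2*π) = 2*π := Real.mul_self_sqrt (by positivity)
  have key : ∀ s : ℝ, phi (s + c) * phi s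
      = Real.exp (-(s + c/2)^2) * (Real.exp (-c^2/4) / (2*π)) := by
    intro s
    rw [phi, phi, div_mul_div_comm, ← Real.exp_add, sq2pi]
    rw [show -(s+c)^2/2 + -s^2/2 = -(s + c/2)^2 + (-c^2/4) by ring, Real.exp_add]
    ring
  simp_rw [key]
  rw [MeasureTheory.integral_mul_const]
  have hshift : (∫ s : ℝ, Real.exp (-(s + c/2)^2)) = Real.sqrt π := by
    rw [show (fun s : ℝ => Real.exp (-(s + c/2)^2))
        = fun s : ℝ => (fun x : ℝ => Real.exp (-x^2)) (s + c/2) from rfl]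
    rw [MeasureTheory.integral_add_right_eq_self (fun x : ℝ => Real.exp (-x^2)) (c/2)]
    simpa using integral_gaussian 1
  rw [hshift]
  have hc2 : (c / Real.sqrt 2)^2 = c^2/2 := by
    rw [div_pow, Real.sq_sqrt (by norm_num : (2:ℝ) ≥ 0)]
  rw [phi, hc2]
  have h2pi2 : Real.sqrt (2*π) * Real.sqrt 2 = 2 * Real.sqrt π := by
    rw [← Real.sqrt_mul (by positivity), show 2*π*2 = 4*π by ring,
      show (4:ℝ)*π = 2^2*π by norm_num, Real.sqrt_mul (by norm_num), Real.sqrt_sq (by norm_num)]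
  have hπ : Real.sqrt π * Real.sqrt π = π := Real.mul_self_sqrt Real.pi_pos.le
  have h1 : -(c^2/2)/2 = -c^2/4 := by ring
  rw [h1, div_div, h2pi2]
  have hsqπ : Real.sqrt π > 0 := Real.sqrt_pos.2 Real.pi_pos
  field_simp
  nlinarith [Real.exp_pos (-c^2/4)]

lemma hasDerivAt_H (c : ℝ) :
    HasDerivAt (fun c => ∫ s, Phi (s + c) * phi s) (∫ s, phi (s + c) * phi s) c := by
  have h := hasDerivAt_integral_of_dominated_loc_of_deriv_le
    (F := fun c s => Phi (s + c) * phi s)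
    (F' := fun c s => phi (s + c) * phi s)
    (x₀ := c) (bound := fun s => (Real.sqrt (2*π))⁻¹ * phi s)
    (Metric.ball_mem_nhds c one_pos)
    (Filter.Eventually.of_forall fun x =>
      ((continuous_Phi.comp (by fun_prop)).mul continuous_phi).aestronglyMeasurable)
    (integrable_Phi_mul_phi c)
    ((continuous_phi.comp (by fun_prop)).mul continuous_phi).aestronglyMeasurable
    (Filter.Eventually.of_forall fun s x _ => by
      rw [Real.norm_eq_abs, abs_of_nonneg (mul_nonneg (phi_pos _).le (phi_pos _).le)]
      exact mul_le_mul_of_nonneg_right (phi_le _) (phi_pos s).le)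
    (integrable_phi.const_mul _)
    (Filter.Eventually.of_forall fun s x _ => by
      have h1 : HasDerivAt (fun c : ℝ => s + c) 1 x := (hasDerivAt_id x).const_add s
      have h2 := (hasDerivAt_Phi (s + x)).comp x h1
      simpa using h2.mul_const (phi s))
  exact h.2

lemma integral_Phi_mul_phi_zero : ∫ s, Phi s * phi s = 1/2 := by
  have hderiv : ∀ x : ℝ, HasDerivAt (fun y => Phi y ^ 2 / 2) (Phi x * phi x) x := by
    intro x
    have := ((hasDerivAt_Phi x).pow 2).div_const 2
    simpa [mul_comm, mul_assoc, mul_div_assoc] using this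
  have hint : Integrable (fun s => Phi s * phi s) := by
    simpa using integrable_Phi_mul_phi 0
  have htop : Tendsto (fun y => Phi y ^ 2 / 2) atTop (𝓝 (1/2)) := by
    have := ((Phi_tendsto_atTop.mul Phi_tendsto_atTop)).div_const 2
    simpa [sq] using this
  have hbot : Tendsto (fun y => Phi y ^ 2 / 2) atBot (𝓝 0) := by
    have := ((Phi_tendsto_atBot.mul Phi_tendsto_atBot)).div_const 2
    simpa [sq] using this
  have hIic : ∫ s in Set.Iic 0, Phi s * phi s = Phi 0 ^ 2 / 2 - 0 :=
    MeasureTheory.integral_Iic_of_hasDerivAt_of_tendsto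
      ((continuous_Phi.pow 2).div_const 2).continuousWithinAt
      (fun x _ => hderiv x) hint.integrableOn hbot
  have hIoi : ∫ s in Set.Ioi 0, Phi s * phi s = 1/2 - Phi 0 ^ 2 / 2 :=
    MeasureTheory.integral_Ioi_of_hasDerivAt_of_tendsto
      ((continuous_Phi.pow 2).div_const 2).continuousWithinAt
      (fun x _ => hderiv x) hint.integrableOn htop
  have := intervalIntegral.integral_Iic_add_Ioi (b := (0:ℝ))
    hint.integrableOn hint.integrableOn
  rw [hIic, hIoi] at this
  rw [← this]; ring

lemma integral_Phi_shift_mul_phi (c : ℝ) :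
    ∫ s, Phi (s + c) * phi s = Phi (c / Real.sqrt 2) := by
  set g : ℝ → ℝ := fun c => (∫ s, Phi (s + c) * phi s) - Phi (c / Real.sqrt 2) with hg
  have hs2 : (0:ℝ) < Real.sqrt 2 := Real.sqrt_pos.2 (by norm_num)
  have hderivPhi : ∀ x : ℝ, HasDerivAt (fun c => Phi (c / Real.sqrt 2))
      (phi (x / Real.sqrt 2) / Real.sqrt 2) x := by
    intro x
    have h1 : HasDerivAt (fun c : ℝ => c / Real.sqrt 2) (1 / Real.sqrt 2) x := by
      simpa using (hasDerivAt_id x).div_const (Real.sqrt 2)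
    have := (hasDerivAt_Phi (x / Real.sqrt 2)).comp x h1
    simpa [div_eq_mul_inv, mul_comm, Function.comp_def] using this
  have hgderiv : ∀ x : ℝ, HasDerivAt g 0 x := by
    intro x
    have := (hasDerivAt_H x).sub (hderivPhi x)
    rw [integral_phi_mul_phi, sub_self] at this
    exact this
  have hconst : g c = g 0 :=
    is_const_of_deriv_eq_zero (fun x => (hgderiv x).differentiableAt)
      (fun x => (hgderiv x).deriv) c 0
  have hzero : g 0 = 0 := by
    simp only [hg, zero_div]
    rw [show (fun s : ℝ => Phi (s + 0) * phi s) = fun s => Phi s * phi s by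
      funext s; rw [add_zero]]
    rw [integral_Phi_mul_phi_zero, Phi_zero]
    ring
  have : g c = 0 := hconst.trans hzero
  simpa [hg, sub_eq_zero] using this

lemma integrable_phi_affine {a : ℝ} (ha : 0 < a) (u : ℝ) :
    Integrable (fun t => phi (a * t + u)) := by
  have h1 : Integrable (fun y : ℝ => phi (y + u)) := integrable_phi.comp_add_right u
  exact h1.comp_mul_left' ha.ne'

lemma integral_phi_affine {a : ℝ} (ha : 0 < a) (u : ℝ) :
    ∫ t, phi (a * t + u) = a⁻¹ := by
  have h1 : (fun t => phi (a * t + u)) = fun t => (fun y => phi (y + u)) (a * t) := rfl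
  rw [h1, MeasureTheory.Measure.integral_comp_mul_left (fun y => phi (y + u)) a]
  rw [MeasureTheory.integral_add_right_eq_self phi u, integral_phi]
  rw [abs_of_pos (inv_pos.2 ha)]
  simp

lemma integral_Phi_phi_affine {a : ℝ} (ha : 0 < a) (b₁ u : ℝ) :
    ∫ t, Phi (a * t + b₁) * phi (a * t + u) = a⁻¹ * Phi ((b₁ - u) / Real.sqrt 2) := by
  have h1 : (fun t => Phi (a * t + b₁) * phi (a * t + u))
      = fun t => (fun y => Phi (y + b₁) * phi (y + u)) (a * t) := rfl
  rw [h1, MeasureTheory.Measure.integral_comp_mul_left (fun y => Phi (y + b₁) * phi (y + u)) a]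
  have h2 : (fun y : ℝ => Phi (y + b₁) * phi (y + u))
      = fun y => (fun s => Phi (s + (b₁ - u)) * phi s) (y + u) := by
    funext y; simp only []; ring_nf
  rw [h2, MeasureTheory.integral_add_right_eq_self (fun s => Phi (s + (b₁ - u)) * phi s) u]
  rw [integral_Phi_shift_mul_phi, abs_of_pos (inv_pos.2 ha), smul_eq_mul]

lemma swap_key {a : ℝ} (ha : 0 < a) (b₁ m M : ℝ) :
    ∫ t, ∫ u in Set.Ioc m M, Phi (a*t+b₁) * phi (a*t+u) =
    ∫ u in Set.Ioc m M, ∫ t, Phi (a*t+b₁) * phi (a*t+u) := by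
  apply MeasureTheory.integral_integral_swap
  have hc : Continuous (fun z : ℝ × ℝ => Phi (a*z.1+b₁) * phi (a*z.1+z.2)) :=
    (continuous_Phi.comp ((continuous_const.mul continuous_fst).add continuous_const)).mul
      (continuous_phi.comp ((continuous_const.mul continuous_fst).add continuous_snd))
  constructor
  · exact hc.aestronglyMeasurable
  · rw [HasFiniteIntegral]
    have hmeas : AEMeasurable
        (fun z : ℝ × ℝ => (‖Phi (a*z.1+b₁) * phi (a*z.1+z.2)‖ₑ : ENNReal))
        (volume.prod (volume.restrict (Set.Ioc m M))) :=
      (hc.measurable.enorm).aemeasurable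
    simp only [Function.uncurry]
    rw [MeasureTheory.lintegral_prod_symm _ hmeas]
    have hinner : ∀ u : ℝ,
        (∫⁻ t, (‖Phi (a*t+b₁) * phi (a*t+u)‖ₑ : ENNReal)) ≤ ENNReal.ofReal a⁻¹ := by
      intro u
      have hb : ∀ t : ℝ, (‖Phi (a*t+b₁) * phi (a*t+u)‖ₑ : ENNReal)
          ≤ ENNReal.ofReal (phi (a*t+u)) := by
        intro t
        rw [Real.enorm_eq_ofReal (mul_nonneg (Phi_nonneg _) (phi_pos _).le)]
        apply ENNReal.ofReal_le_ofReal
        nlinarith [Phi_nonneg (a*t+b₁), Phi_le_one (a*t+b₁), phi_pos (a*t+u)]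
      calc (∫⁻ t, (‖Phi (a*t+b₁) * phi (a*t+u)‖ₑ : ENNReal))
          ≤ ∫⁻ t, ENNReal.ofReal (phi (a*t+u)) := lintegral_mono hb
        _ = ENNReal.ofReal (∫ t, phi (a*t+u)) :=
            (MeasureTheory.ofReal_integral_eq_lintegral_ofReal (integrable_phi_affine ha u)
              (Filter.Eventually.of_forall fun t => (phi_pos _).le)).symm
        _ = ENNReal.ofReal a⁻¹ := by rw [integral_phi_affine ha u]
    calc (∫⁻ u in Set.Ioc m M, ∫⁻ t, (‖Phi (a*t+b₁) * phi (a*t+u)‖ₑ : ENNReal))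
        ≤ ∫⁻ _ in Set.Ioc m M, ENNReal.ofReal a⁻¹ :=
          lintegral_mono fun u => hinner u
      _ = ENNReal.ofReal a⁻¹ * volume (Set.Ioc m M) := by rw [setLIntegral_const]
      _ < ⊤ := ENNReal.mul_lt_top ENNReal.ofReal_lt_top measure_Ioc_lt_top

lemma main_core {a : ℝ} (ha : 0 < a) (b₁ m M : ℝ) (hmM : m ≤ M) :
    ∫ t, ∫ u in m..M, Phi (a*t+b₁) * phi (a*t+u) =
    ∫ u in m..M, a⁻¹ * Phi ((b₁-u)/Real.sqrt 2) := by
  simp_rw [intervalIntegral.integral_of_le hmM]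
  rw [swap_key ha b₁ m M]
  simp_rw [integral_Phi_phi_affine ha b₁]

lemma hasDerivAt_phi (t : ℝ) : HasDerivAt phi (-t * phi t) t := by
  have h : HasDerivAt (fun t : ℝ => -t^2/2) (-t) t := by
    have := ((hasDerivAt_pow 2 t).neg).div_const 2
    refine this.congr_deriv ?_
    simp; ring
  have h2 := (h.exp).div_const (Real.sqrt (2*π))
  have h3 : Real.exp (-t^2/2) * -t / Real.sqrt (2*π) = -t * phi t := by
    rw [phi]; ring
  rw [← h3]
  exact h2

lemma hasDerivAt_G {a : ℝ} (ha : 0 < a) (b₁ : ℝ) (u : ℝ) :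
    HasDerivAt (fun u => -Real.sqrt 2 * a⁻¹ *
        (((b₁-u)/Real.sqrt 2) * Phi ((b₁-u)/Real.sqrt 2) + phi ((b₁-u)/Real.sqrt 2)))
      (a⁻¹ * Phi ((b₁-u)/Real.sqrt 2)) u := by
  have hs2 : (0:ℝ) < Real.sqrt 2 := Real.sqrt_pos.2 (by norm_num)
  have hv : HasDerivAt (fun u : ℝ => (b₁-u)/Real.sqrt 2) (-(1/Real.sqrt 2)) u := by
    have := ((hasDerivAt_id u).const_sub b₁).div_const (Real.sqrt 2)
    refine this.congr_deriv ?_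
    ring
  set v := (b₁ - u)/Real.sqrt 2 with hv_def
  have h1 : HasDerivAt (fun w : ℝ => w * Phi w + phi w) (Phi v) v := by
    have := ((hasDerivAt_id v).mul (hasDerivAt_Phi v)).add (hasDerivAt_phi v)
    refine this.congr_deriv ?_
    simp
  have h2 := (h1.comp u hv).const_mul (-Real.sqrt 2 * a⁻¹)
  have heq : a⁻¹ * Phi v = -Real.sqrt 2 * a⁻¹ * (Phi v * -(1/Real.sqrt 2)) := by
    field_simp
  rw [heq]
  exact h2

theorem stmt5 (a b₁ b₂ b₃ : ℝ) (ha : 0 < a) :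
    ∫ t : ℝ, Phi (a * t + b₁) * (Phi (a * t + b₂) - Phi (a * t + b₃)) =
      (-Real.sqrt 2 / a) *
        (((b₁ - b₂) / Real.sqrt 2) * Phi ((b₁ - b₂) / Real.sqrt 2) +
          phi ((b₁ - b₂) / Real.sqrt 2) -
          ((b₁ - b₃) / Real.sqrt 2) * Phi ((b₁ - b₃) / Real.sqrt 2) -
          phi ((b₁ - b₃) / Real.sqrt 2)) := by
  have hkey : ∀ t : ℝ, Phi (a*t+b₁) * (Phi (a*t+b₂) - Phi (a*t+b₃))
      = ∫ u in b₃..b₂, Phi (a*t+b₁) * phi (a*t+u) := by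
    intro t
    rw [intervalIntegral.integral_const_mul]
    congr 1
    rw [Phi_sub_Phi, intervalIntegral.integral_comp_add_left phi (a*t)]
  rw [integral_congr_ae (Filter.Eventually.of_forall hkey)]
  have hfinal : (∫ u in b₃..b₂, a⁻¹ * Phi ((b₁-u)/Real.sqrt 2)) =
      (-Real.sqrt 2 / a) *
        (((b₁ - b₂) / Real.sqrt 2) * Phi ((b₁ - b₂) / Real.sqrt 2) +
          phi ((b₁ - b₂) / Real.sqrt 2) -
          ((b₁ - b₃) / Real.sqrt 2) * Phi ((b₁ - b₃) / Real.sqrt 2) -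
          phi ((b₁ - b₃) / Real.sqrt 2)) := by
    have hcont : Continuous (fun u : ℝ => a⁻¹ * Phi ((b₁-u)/Real.sqrt 2)) :=
      continuous_const.mul (continuous_Phi.comp (by fun_prop))
    rw [intervalIntegral.integral_eq_sub_of_hasDerivAt
      (fun u _ => hasDerivAt_G ha b₁ u) (hcont.intervalIntegrable _ _)]
    rw [div_eq_mul_inv]
    ring
  rcases le_total b₃ b₂ with h | h
  · rw [main_core ha b₁ b₃ b₂ h, hfinal]
  · have h1 : ∀ t : ℝ, (∫ u in b₃..b₂, Phi (a*t+b₁) * phi (a*t+u))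
        = -(∫ u in b₂..b₃, Phi (a*t+b₁) * phi (a*t+u)) :=
      fun t => intervalIntegral.integral_symm b₂ b₃
    rw [integral_congr_ae (Filter.Eventually.of_forall h1), integral_neg,
      main_core ha b₁ b₂ b₃ h, ← intervalIntegral.integral_symm b₂ b₃, hfinal]
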